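/- arXiv:2510.27445 — 2 statements merged into one kernel-verified Lean document; each statement's English description precedes it below -/
import Mathlib

section
/- A linear bijection φ on se(2) = R ×_J R^2, written in block form, is a Lie algebra automorphism if and only if φ = [[ε,0],[η,P]] where ε = ±1, η ∈ R^2, and P ∈ GL(2,R) satisfies PJ = εJP, with J = [[0,-1],[1,0]]. -/
/-- J = [[0,-1],[1,0]] -/
def J : Matrix (Fin 2) (Fin 2) ℝ := !![0, -1; 1, 0]

/-- se(2) = ℝ ×_J ℝ² with bracket [(s,v),(t,w)] = (0, sJw - tJv). -/
abbrev se2 := ℝ × (Fin 2 → ℝ)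

def se2Br (x y : se2) : se2 :=
  (0, x.1 • J.mulVec y.2 - y.1 • J.mulVec x.2)

lemma J_mul_J : J * J = -1 := by
  ext i j
  fin_cases i <;> fin_cases j <;>
    simp [J, Matrix.mul_apply, Fin.sum_univ_two]

lemma J_mulVec_J (v : Fin 2 → ℝ) : J.mulVec (J.mulVec v) = -v := by
  rw [Matrix.mulVec_mulVec, J_mul_J, Matrix.neg_mulVec, Matrix.one_mulVec]

lemma det_J : J.det = 1 := by
  simp [J, Matrix.det_fin_two_of]

lemma matrix_ext_of_mulVec {M N : Matrix (Fin 2) (Fin 2) ℝ}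
    (h : ∀ v, M.mulVec v = N.mulVec v) : M = N := by
  ext i j
  have := congrFun (h (Pi.single j 1)) i
  simpa [Matrix.mulVec_single_one] using this

/-- A linear bijection φ of se(2) is a Lie algebra automorphism iff, in block
form, φ = [[ε,0],[η,P]] with ε = ±1, η ∈ ℝ² and P ∈ GL(2,ℝ) with PJ = εJP. -/
theorem stmt7 (φ : se2 ≃ₗ[ℝ] se2) :
    (∀ x y, φ (se2Br x y) = se2Br (φ x) (φ y)) ↔
    ∃ (ε : ℝ) (η : Fin 2 → ℝ) (P : Matrix (Fin 2) (Fin 2) ℝ),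
      (ε = 1 ∨ ε = -1) ∧ IsUnit P ∧ P * J = ε • (J * P) ∧
      ∀ (s : ℝ) (v : Fin 2 → ℝ), φ (s, v) = (ε * s, s • η + P.mulVec v) := by
  constructor
  · intro h
    set a : ℝ := (φ (1, 0)).1 with ha
    set η : Fin 2 → ℝ := (φ (1, 0)).2 with hη
    -- the linear map v ↦ second component of φ(0,v)
    set L : (Fin 2 → ℝ) →ₗ[ℝ] (Fin 2 → ℝ) :=
      (LinearMap.snd ℝ ℝ (Fin 2 → ℝ)).comp
        (φ.toLinearMap.comp (LinearMap.inr ℝ ℝ (Fin 2 → ℝ))) with hL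
    set P : Matrix (Fin 2) (Fin 2) ℝ := LinearMap.toMatrix' L with hPdef
    have hP : ∀ v, P.mulVec v = (φ ((0 : ℝ), v)).2 := by
      intro v
      have h1 : P.mulVec v = Matrix.toLin' P v := (Matrix.toLin'_apply _ _).symm
      rw [h1, hPdef, Matrix.toLin'_toMatrix']
      rfl
    -- first component of φ on (0, v) vanishes
    have hbr1 : ∀ x y, (φ (se2Br x y)).1 = 0 := by
      intro x y; rw [h]; rfl
    have hf : ∀ v : Fin 2 → ℝ, (φ ((0 : ℝ), v)).1 = 0 := by
      intro v
      have hb : se2Br ((1 : ℝ), (0 : Fin 2 → ℝ)) ((0 : ℝ), -(J.mulVec v)) = ((0 : ℝ), v) := by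
        simp only [se2Br, one_smul, zero_smul, sub_zero, Matrix.mulVec_neg, J_mulVec_J, neg_neg]
      have := hbr1 ((1 : ℝ), (0 : Fin 2 → ℝ)) ((0 : ℝ), -(J.mulVec v))
      rwa [hb] at this
    -- the commutation relation P J = a J P
    have hcomm : P * J = a • (J * P) := by
      apply matrix_ext_of_mulVec
      intro w
      have := h ((1 : ℝ), (0 : Fin 2 → ℝ)) ((0 : ℝ), w)
      have hb : se2Br ((1 : ℝ), (0 : Fin 2 → ℝ)) ((0 : ℝ), w) = ((0 : ℝ), J.mulVec w) := by
        simp [se2Br]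
      rw [hb] at this
      have h2 := congrArg Prod.snd this
      simp only [se2Br] at h2
      rw [hf w] at h2
      simp only [zero_smul, sub_zero] at h2
      calc (P * J).mulVec w = P.mulVec (J.mulVec w) := by rw [Matrix.mulVec_mulVec]
        _ = a • J.mulVec (P.mulVec w) := by rw [hP, hP, h2]
        _ = (a • (J * P)).mulVec w := by
            rw [Matrix.smul_mulVec, Matrix.mulVec_mulVec]
    -- P is a unit
    have hPu : IsUnit P := by
      rw [← Matrix.mulVec_injective_iff_isUnit]
      have hinj : Function.Injective fun v => P.mulVec v := by
        intro v w hvw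
        simp only [hP] at hvw
        have : φ ((0 : ℝ), v) = φ ((0 : ℝ), w) := by
          apply Prod.ext
          · rw [hf, hf]
          · exact hvw
        have := φ.injective this
        exact (Prod.ext_iff.mp this).2
      exact hinj
    -- a = ±1
    have hdetP : P.det ≠ 0 := by
      intro h0
      exact (Matrix.isUnit_iff_isUnit_det P |>.mp hPu).ne_zero (by rw [h0])
    have ha2 : a * a = 1 := by
      have hd := congrArg Matrix.det hcomm
      rw [Matrix.det_mul, Matrix.det_smul, Matrix.det_mul, det_J] at hd
      simp only [mul_one, one_mul, Fintype.card_fin] at hd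
      have h3 : (a ^ 2 - 1) * P.det = 0 := by linear_combination -hd
      rcases mul_eq_zero.mp h3 with h4 | h4
      · nlinarith [h4]
      · exact absurd h4 hdetP
    refine ⟨a, η, P, mul_self_eq_one_iff.mp ha2, hPu, hcomm, ?_⟩
    intro s v
    have hsv : ((s : ℝ), v) = s • ((1 : ℝ), (0 : Fin 2 → ℝ)) + ((0 : ℝ), v) := by
      simp [Prod.ext_iff]
    rw [hsv, map_add, map_smul]
    apply Prod.ext
    · simp [hf v, ← ha, mul_comm]
    · simp [hP v, ← hη]
  · rintro ⟨ε, η, P, hε, hPu, hPJ, hφ⟩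
    intro x y
    obtain ⟨x1, x2⟩ := x
    obtain ⟨y1, y2⟩ := y
    simp only [se2Br, hφ]
    apply Prod.ext
    · simp
    · simp only [mul_zero, zero_smul, zero_add]
      have key : ∀ v : Fin 2 → ℝ, P.mulVec (J.mulVec v) = ε • J.mulVec (P.mulVec v) := by
        intro v
        rw [Matrix.mulVec_mulVec, hPJ, Matrix.smul_mulVec, Matrix.mulVec_mulVec]
      rw [Matrix.mulVec_sub, Matrix.mulVec_smul, Matrix.mulVec_smul, key, key,
        Matrix.mulVec_add, Matrix.mulVec_add, Matrix.mulVec_smul, Matrix.mulVec_smul]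
      rcases hε with h1 | h1 <;> subst h1 <;>
        · funext i
          simp [Matrix.mulVec_add, Matrix.mulVec_smul]
          fin_cases i <;> simp <;> ring
end

section
/- Every derivation of g = se(2) × R has block form D = [[0,0,0],[ξ,A,0],[a,0,r]] with ξ ∈ R^2, a,r ∈ R, and A ∈ gl(2,R) with AJ = JA; conversely every such block matrix is a derivation of g. -/
/-- g = se(2) × ℝ, elements written (s, v, c) ∈ ℝ × ℝ² × ℝ. -/
abbrev gLie := ℝ × (Fin 2 → ℝ) × ℝ

/-- Bracket on g = se(2) × ℝ: [(X,a),(Y,b)] = ([X,Y], 0), where the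
se(2)-bracket is [(s,v),(t,w)] = (0, sJw - tJv). -/
def gBr (x y : gLie) : gLie :=
  (0, x.1 • J.mulVec y.2.1 - y.1 • J.mulVec x.2.1, 0)

lemma decomp (D : gLie →ₗ[ℝ] gLie) (s : ℝ) (v : Fin 2 → ℝ) (c : ℝ) :
    D (s, v, c) = s • D (1, 0, 0) + v 0 • D (0, (Pi.single 0 1 : Fin 2 → ℝ), 0)
      + v 1 • D (0, (Pi.single 1 1 : Fin 2 → ℝ), 0) + c • D (0, 0, 1) := by
  have h : (s, v, c) = s • ((1:ℝ), (0 : Fin 2 → ℝ), (0:ℝ))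
      + v 0 • ((0:ℝ), (Pi.single 0 1 : Fin 2 → ℝ), (0:ℝ))
      + v 1 • ((0:ℝ), (Pi.single 1 1 : Fin 2 → ℝ), (0:ℝ))
      + c • ((0:ℝ), (0 : Fin 2 → ℝ), (1:ℝ)) := by
    refine Prod.ext ?_ (Prod.ext ?_ ?_)
    · simp
    · funext i
      fin_cases i <;> simp [Pi.single_apply]
    · simp
  rw [h, map_add, map_add, map_add, map_smul, map_smul, map_smul, map_smul]

/-- A linear map D on g = se(2) × ℝ is a derivation iff, in 1+2+1 block form,
D = [[0,0,0],[ξ,A,0],[a,0,r]] with ξ ∈ ℝ², a, r ∈ ℝ and AJ = JA. -/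
theorem stmt8 (D : gLie →ₗ[ℝ] gLie) :
    (∀ x y, D (gBr x y) = gBr (D x) y + gBr x (D y)) ↔
    ∃ (ξ : Fin 2 → ℝ) (A : Matrix (Fin 2) (Fin 2) ℝ) (a r : ℝ),
      A * J = J * A ∧
      ∀ (s : ℝ) (v : Fin 2 → ℝ) (c : ℝ),
        D (s, v, c) = (0, s • ξ + A.mulVec v, a * s + r * c) := by
  constructor
  · intro h
    obtain ⟨p, ξ, a, hX⟩ : ∃ p ξ a, D (1, (0:Fin 2 → ℝ), (0:ℝ)) = (p, ξ, a) := ⟨_, _, _, rfl⟩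
    obtain ⟨b0, w0, a0, hB0⟩ : ∃ b w a', D (0, (Pi.single 0 1 : Fin 2 → ℝ), (0:ℝ)) = (b, w, a') :=
      ⟨_, _, _, rfl⟩
    obtain ⟨b1, w1, a1, hB1⟩ : ∃ b w a', D (0, (Pi.single 1 1 : Fin 2 → ℝ), (0:ℝ)) = (b, w, a') :=
      ⟨_, _, _, rfl⟩
    obtain ⟨q, η, r, hC⟩ : ∃ q η r, D ((0:ℝ), (0:Fin 2 → ℝ), (1:ℝ)) = (q, η, r) := ⟨_, _, _, rfl⟩
    have hD : ∀ (s : ℝ) (v : Fin 2 → ℝ) (c : ℝ), D (s, v, c) =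
        (s * p + v 0 * b0 + v 1 * b1 + c * q,
         fun i => s * ξ i + v 0 * w0 i + v 1 * w1 i + c * η i,
         s * a + v 0 * a0 + v 1 * a1 + c * r) := by
      intro s v c
      rw [decomp, hX, hB0, hB1, hC]
      refine Prod.ext ?_ (Prod.ext ?_ ?_)
      · simp [mul_comm]
      · funext i; simp [mul_comm]
      · simp [mul_comm]
    have I1 := h (1, (0:Fin 2 → ℝ), (0:ℝ)) (0, (Pi.single 0 1 : Fin 2 → ℝ), 0)
    have I2 := h (1, (0:Fin 2 → ℝ), (0:ℝ)) (0, (Pi.single 1 1 : Fin 2 → ℝ), 0)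
    have I3 := h ((0:ℝ), (0:Fin 2 → ℝ), (1:ℝ)) (1, (0:Fin 2 → ℝ), (0:ℝ))
    have I4 := h ((0:ℝ), (0:Fin 2 → ℝ), (1:ℝ)) (0, (Pi.single 0 1 : Fin 2 → ℝ), 0)
    simp only [gBr, hD] at I1 I2 I3 I4
    simp [Prod.mk.injEq, funext_iff, Fin.forall_fin_two, Matrix.mulVec, dotProduct,
      Fin.sum_univ_two, J, Matrix.cons_val_zero, Matrix.cons_val_one, Matrix.head_cons,
      Matrix.vecHead, Matrix.vecTail, Pi.single_apply] at I1 I2 I3 I4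
    obtain ⟨hb1, ⟨e1, e2⟩, ha1⟩ := I1
    obtain ⟨hb0, ⟨e3, e4⟩, ha0⟩ := I2
    obtain ⟨hη1, hη0⟩ := I3
    have hq : q = 0 := I4
    have hp : p = 0 := by linarith
    refine ⟨ξ, !![w0 0, w1 0; w0 1, w1 1], a, r, ?_, ?_⟩
    · ext i j
      fin_cases i <;> fin_cases j <;>
        simp [Matrix.mul_apply, Fin.sum_univ_two, J] <;> linarith
    · intro s v c
      rw [hD]
      refine Prod.ext ?_ (Prod.ext ?_ ?_)
      · simp [hp, hb0, hb1, hq]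
      · funext i
        fin_cases i <;>
          simp [Matrix.mulVec, dotProduct, Fin.sum_univ_two, hη0, ← hη1, mul_comm] <;> ring
      · simp [ha0, ha1, mul_comm]
  · rintro ⟨ξ, A, a, r, hAJ, hform⟩ ⟨s, v, c⟩ ⟨t, w, d⟩
    have h1 : A 0 1 = - A 1 0 := by
      have := congrFun (congrFun hAJ 0) 0
      simpa [Matrix.mul_apply, Fin.sum_univ_two, J] using this
    have h2 : A 0 0 = A 1 1 := by
      have := congrFun (congrFun hAJ 0) 1
      simpa [Matrix.mul_apply, Fin.sum_univ_two, J] using this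
    simp only [gBr]
    rw [hform, hform, hform]
    simp [Prod.mk.injEq, funext_iff, Fin.forall_fin_two, Matrix.mulVec, dotProduct,
      Fin.sum_univ_two, J, Matrix.cons_val_zero, Matrix.cons_val_one, Matrix.head_cons,
      Matrix.vecHead, Matrix.vecTail]
    constructor
    · linear_combination (s * w 0 - t * v 0) * h1 + (t * v 1 - s * w 1) * h2
    · linear_combination (t * v 1 - s * w 1) * h1 + (t * v 0 - s * w 0) * h2
end
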